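/- Let n be a positive integer and let p(x) = Σ_{k=0}^{m} a_k x^{2k+1} be an odd polynomial with real coefficients such that 2^{2n²}·(f((1+x)/2^{2n}) − f((1−x)/2^{2n})) = p(x) for all 0 ≤ x ≤ 1. Then f(1/2^{2n+1}) = (1/(2^{2n²+2n+2}·(2^{2n}−1)))·Σ_{k=0}^{m} a_k/((k+1)(2k+3)). -/

import Mathlib

open scoped BigOperators
open MeasureTheory intervalIntegral

theorem fabius_stmt_12 (f : ℝ → ℝ)
    (hcont : ContinuousOn f (Set.Ici 0))
    (hsym : ∀ x : ℝ, 0 ≤ x → x ≤ 1 → f x + f (1 - x) = 1)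
    (hint : ∀ x : ℝ, 0 ≤ x → f x = ∫ t in (0:ℝ)..(2 * x), f t)
    (n m : ℕ) (hn : 0 < n) (a : ℕ → ℝ)
    (hp : ∀ x : ℝ, 0 ≤ x → x ≤ 1 →
      (2 : ℝ) ^ (2 * n ^ 2) * (f ((1 + x) / 2 ^ (2 * n)) - f ((1 - x) / 2 ^ (2 * n))) =
        ∑ k ∈ Finset.range (m + 1), a k * x ^ (2 * k + 1)) :
    f (1 / 2 ^ (2 * n + 1)) =
      (1 / ((2 : ℝ) ^ (2 * n ^ 2 + 2 * n + 2) * ((2 : ℝ) ^ (2 * n) - 1))) *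
        ∑ k ∈ Finset.range (m + 1), a k / (((k : ℝ) + 1) * (2 * (k : ℝ) + 3)) := by
  set D : ℝ := 2 ^ (2 * n) with hDdef
  have hD1 : (1:ℝ) < D := by
    rw [hDdef]
    exact one_lt_pow₀ (by norm_num) (by omega)
  have hD0 : (0:ℝ) < D := by linarith
  set c : ℝ := D⁻¹ with hcdef
  have hc0 : 0 < c := inv_pos.mpr hD0
  have hcn : c ≠ 0 := ne_of_gt hc0
  have hcD : c⁻¹ = D := by rw [hcdef, inv_inv]
  -- basic facts
  have hF : ∀ u : ℝ, 0 ≤ u → (∫ t in (0:ℝ)..u, f t) = f (u / 2) := by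
    intro u hu
    have h := hint (u / 2) (by linarith)
    rw [show 2 * (u / 2) = u by ring] at h
    exact h.symm
  have hIcc : ∀ x y : ℝ, Set.uIcc x y ⊆ Set.Ici 0 → ∀ z ∈ Set.uIcc x y, (0:ℝ) ≤ z :=
    fun x y h z hz => h hz
  have hIntF : ∀ x y : ℝ, 0 ≤ x → 0 ≤ y → IntervalIntegrable f volume x y := by
    intro x y hx hy
    apply ContinuousOn.intervalIntegrable
    apply hcont.mono
    intro z hz
    rw [Set.mem_uIcc] at hz
    rcases hz with ⟨h1, _⟩ | ⟨h1, _⟩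
    · exact le_trans hx h1
    · exact le_trans hy h1
  have hIC : ∀ p q y : ℝ, 0 ≤ y → (∀ x ∈ Set.Icc (0:ℝ) y, 0 ≤ p * x + q) →
      IntervalIntegrable (fun x => f (p * x + q)) volume 0 y := by
    intro p q y hy hnn
    apply ContinuousOn.intervalIntegrable
    rw [Set.uIcc_of_le hy]
    exact hcont.comp ((continuous_const.mul continuous_id).add continuous_const).continuousOn
      (fun x hx => hnn x hx)
  -- Key inner identity
  have key1 : ∀ y : ℝ, 0 ≤ y → y ≤ 1 →
      (2:ℝ) ^ (2 * n ^ 2) * D * (f (c/2 * y + c/2) + f (c/2 - c/2 * y) - 2 * f (c/2)) =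
        ∑ k ∈ Finset.range (m + 1), a k / (2 * (k:ℝ) + 2) * y ^ (2 * k + 2) := by
    intro y hy0 hy1
    have harg1 : ∀ x : ℝ, (1 + x) / 2 ^ (2 * n) = c * x + c := by
      intro x
      rw [hcdef, ← hDdef]
      field_simp
      ring
    have harg2 : ∀ x : ℝ, (1 - x) / 2 ^ (2 * n) = (-c) * x + c := by
      intro x
      rw [hcdef, ← hDdef]
      field_simp
      ring
    have e1 : (∫ x in (0:ℝ)..y,
        (2:ℝ) ^ (2 * n ^ 2) * (f (c * x + c) - f ((-c) * x + c))) =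
        ∫ x in (0:ℝ)..y, ∑ k ∈ Finset.range (m + 1), a k * x ^ (2 * k + 1) := by
      apply intervalIntegral.integral_congr
      intro x hx
      rw [Set.uIcc_of_le hy0] at hx
      show (2:ℝ) ^ (2 * n ^ 2) * (f (c * x + c) - f ((-c) * x + c)) = _
      rw [← harg1, ← harg2]
      exact hp x hx.1 (le_trans hx.2 hy1)
    -- compute LHS of e1
    have hi1 : IntervalIntegrable (fun x => f (c * x + c)) volume 0 y :=
      hIC c c y hy0 (fun x hx => by nlinarith [hx.1])
    have hi2 : IntervalIntegrable (fun x => f ((-c) * x + c)) volume 0 y :=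
      hIC (-c) c y hy0 (fun x hx => by nlinarith [hx.1, hx.2, hy1])
    have eA : (∫ x in (0:ℝ)..y, f (c * x + c)) = D * (f ((c*y+c)/2) - f (c/2)) := by
      rw [intervalIntegral.integral_comp_mul_add f hcn c, mul_zero, zero_add]
      rw [← intervalIntegral.integral_interval_sub_left
        (hIntF 0 (c*y+c) le_rfl (by nlinarith)) (hIntF 0 c le_rfl (le_of_lt hc0))]
      rw [hF (c*y+c) (by nlinarith), hF c (le_of_lt hc0), smul_eq_mul, hcD]
    have eB : (∫ x in (0:ℝ)..y, f ((-c) * x + c)) = D * (f (c/2) - f ((c-c*y)/2)) := by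
      rw [intervalIntegral.integral_comp_mul_add f (neg_ne_zero.mpr hcn) c, mul_zero, zero_add]
      rw [intervalIntegral.integral_symm]
      rw [← intervalIntegral.integral_interval_sub_left
        (hIntF 0 c le_rfl (le_of_lt hc0)) (hIntF 0 ((-c)*y+c) le_rfl (by nlinarith))]
      rw [hF c (le_of_lt hc0), hF ((-c)*y+c) (by nlinarith), smul_eq_mul]
      have : (-c)⁻¹ = -D := by rw [inv_neg, hcD]
      rw [this]
      have : (-c) * y + c = c - c * y := by ring
      rw [this]
      ring
    -- compute RHS of e1
    have eR : (∫ x in (0:ℝ)..y, ∑ k ∈ Finset.range (m + 1), a k * x ^ (2 * k + 1)) =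
        ∑ k ∈ Finset.range (m + 1), a k / (2 * (k:ℝ) + 2) * y ^ (2 * k + 2) := by
      rw [intervalIntegral.integral_finset_sum]
      · apply Finset.sum_congr rfl
        intro k _
        rw [intervalIntegral.integral_const_mul, integral_pow]
        rw [show (0:ℝ) ^ (2 * k + 1 + 1) = 0 by simp, sub_zero,
          show 2 * k + 1 + 1 = 2 * k + 2 from rfl]
        push_cast
        rw [show 2 * (k:ℝ) + 1 + 1 = 2 * (k:ℝ) + 2 by ring]
        rw [div_mul_eq_mul_div, mul_div_assoc]
      · intro k _
        exact (continuous_const.mul (continuous_pow _)).intervalIntegrable 0 y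
    rw [intervalIntegral.integral_const_mul, intervalIntegral.integral_sub hi1 hi2, eA, eB, eR] at e1
    rw [← e1]
    have h1 : (c * y + c) / 2 = c/2 * y + c/2 := by ring
    have h2 : (c - c * y) / 2 = c/2 - c/2 * y := by ring
    rw [h1, h2]
    ring
  -- integrate key1 over [0,1]
  have e2 : (∫ y in (0:ℝ)..1,
      (2:ℝ) ^ (2 * n ^ 2) * D * (f (c/2 * y + c/2) + f (c/2 - c/2 * y) - 2 * f (c/2))) =
      ∫ y in (0:ℝ)..1, ∑ k ∈ Finset.range (m + 1), a k / (2 * (k:ℝ) + 2) * y ^ (2 * k + 2) := by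
    apply intervalIntegral.integral_congr
    intro y hy
    rw [Set.uIcc_of_le (by norm_num : (0:ℝ) ≤ 1)] at hy
    exact key1 y hy.1 hy.2
  have hc2 : c / 2 ≠ 0 := by positivity
  have hj1 : IntervalIntegrable (fun y => f (c/2 * y + c/2)) volume 0 1 :=
    hIC (c/2) (c/2) 1 (by norm_num) (fun x hx => by nlinarith [hx.1])
  have hj2 : IntervalIntegrable (fun y => f (c/2 - c/2 * y)) volume 0 1 := by
    have := hIC (-(c/2)) (c/2) 1 (by norm_num) (fun x hx => by nlinarith [hx.1, hx.2])
    apply this.congr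
    intro x _
    dsimp only
    ring_nf
  have eJ1 : (∫ y in (0:ℝ)..1, f (c/2 * y + c/2)) = 2 * D * (f (c/2) - f (c/4)) := by
    rw [intervalIntegral.integral_comp_mul_add f hc2 (c/2), mul_zero, zero_add]
    have : c/2 * 1 + c/2 = c := by ring
    rw [this]
    rw [← intervalIntegral.integral_interval_sub_left
      (hIntF 0 c le_rfl (le_of_lt hc0)) (hIntF 0 (c/2) le_rfl (by positivity))]
    rw [hF c (le_of_lt hc0), hF (c/2) (by positivity), smul_eq_mul]
    have hi : (c/2)⁻¹ = 2 * D := by rw [inv_div, div_eq_mul_inv, hcD]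
    rw [hi]
    have : c / 2 / 2 = c / 4 := by ring
    rw [this]
  have eJ2 : (∫ y in (0:ℝ)..1, f (c/2 - c/2 * y)) = 2 * D * f (c/4) := by
    rw [intervalIntegral.integral_comp_sub_mul f hc2 (c/2), mul_one, mul_zero, sub_zero, sub_self]
    rw [hF (c/2) (by positivity), smul_eq_mul]
    have hi : (c/2)⁻¹ = 2 * D := by rw [inv_div, div_eq_mul_inv, hcD]
    rw [hi]
    have : c / 2 / 2 = c / 4 := by ring
    rw [this]
  have eJ3 : (∫ _ in (0:ℝ)..1, 2 * f (c/2)) = 2 * f (c/2) := by simp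
  have eR2 : (∫ y in (0:ℝ)..1, ∑ k ∈ Finset.range (m + 1),
      a k / (2 * (k:ℝ) + 2) * y ^ (2 * k + 2)) =
      ∑ k ∈ Finset.range (m + 1), a k / ((2 * (k:ℝ) + 2) * (2 * (k:ℝ) + 3)) := by
    rw [intervalIntegral.integral_finset_sum]
    · apply Finset.sum_congr rfl
      intro k _
      rw [intervalIntegral.integral_const_mul, integral_pow]
      rw [show (0:ℝ) ^ (2 * k + 2 + 1) = 0 by simp, sub_zero, one_pow]
      push_cast
      rw [show 2 * (k:ℝ) + 2 + 1 = 2 * (k:ℝ) + 3 by ring]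
      have h2 : (2 * (k:ℝ) + 2) ≠ 0 := by positivity
      have h3 : (2 * (k:ℝ) + 3) ≠ 0 := by positivity
      field_simp
    · intro k _
      exact (continuous_const.mul (continuous_pow _)).intervalIntegrable 0 1
  -- assemble
  have eL2 : (∫ y in (0:ℝ)..1,
      (2:ℝ) ^ (2 * n ^ 2) * D * (f (c/2 * y + c/2) + f (c/2 - c/2 * y) - 2 * f (c/2))) =
      (2:ℝ) ^ (2 * n ^ 2) * D * (2 * D * f (c/2) - 2 * f (c/2)) := by
    rw [intervalIntegral.integral_const_mul]
    rw [intervalIntegral.integral_sub (hj1.add hj2)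
      (intervalIntegrable_const), intervalIntegral.integral_add hj1 hj2, eJ1, eJ2]
    rw [intervalIntegral.integral_const, smul_eq_mul]
    ring
  rw [eL2, eR2] at e2
  -- final algebra
  have hgoalarg : (1:ℝ) / 2 ^ (2 * n + 1) = c / 2 := by
    rw [hcdef, hDdef, pow_succ]
    field_simp
  rw [hgoalarg]
  have hsum : ∑ k ∈ Finset.range (m + 1), a k / ((2 * (k:ℝ) + 2) * (2 * (k:ℝ) + 3)) =
      (1/2) * ∑ k ∈ Finset.range (m + 1), a k / (((k:ℝ) + 1) * (2 * (k:ℝ) + 3)) := by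
    rw [Finset.mul_sum]
    apply Finset.sum_congr rfl
    intro k _
    rw [show (2 * (k:ℝ) + 2) * (2 * (k:ℝ) + 3) = (((k:ℝ) + 1) * (2 * (k:ℝ) + 3)) * 2 by ring,
      ← div_div, one_div, inv_mul_eq_div]
  rw [hsum] at e2
  have hpow : (2:ℝ) ^ (2 * n ^ 2 + 2 * n + 2) = 2 ^ (2 * n ^ 2) * D * 4 := by
    rw [hDdef, pow_add, pow_add]
    norm_num
  rw [hpow]
  have hA : (2:ℝ) ^ (2 * n ^ 2) ≠ 0 := by positivity
  have hDm1 : D - 1 ≠ 0 := by linarith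
  have hDn : D ≠ 0 := ne_of_gt hD0
  have hS : ∑ k ∈ Finset.range (m + 1), a k / (((k:ℝ) + 1) * (2 * (k:ℝ) + 3)) =
      4 * (2:ℝ) ^ (2 * n ^ 2) * D * (D - 1) * f (c / 2) := by
    linear_combination -2 * e2
  rw [hS]
  field_simp
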